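/- For every complex number q with |q| < 1, ∏_{n=1}^∞ (1-q^{2n})⁹ / ((1-qⁿ)³ (1-q^{4n})³) = ∑_{n=0}^∞ (-2/n) · n · q^{(n²-1)/8}, where the sum effectively runs over odd n (for which (n²-1)/8 is a nonnegative integer) and (-2/n) is the Kronecker symbol. -/

import Mathlib

/-- The Kronecker symbol `(-2/n)`. -/
def kronNegTwo (n : ℕ) : ℤ :=
  if n % 8 = 1 ∨ n % 8 = 3 then 1
  else if n % 8 = 5 ∨ n % 8 = 7 then -1
  else 0

open Finset


/-- `TT m = m*(m-1)/2`. -/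
def TT : ℕ → ℕ
  | 0 => 0
  | (m+1) => TT m + m

lemma TT_succ (m : ℕ) : TT (m+1) = TT m + m := rfl

lemma TT_add (a b : ℕ) : TT (a + b) = TT a + TT b + a * b := by
  induction b with
  | zero => simp [TT]
  | succ b ih =>
    have : a + (b+1) = (a+b) + 1 := by ring
    rw [this, TT_succ, ih, TT_succ]; ring

/-- `qfac q i = ∏_{k=1}^i (1 - q^k)`. -/
noncomputable def qfac (q : ℂ) (i : ℕ) : ℂ := ∏ k ∈ range i, (1 - q^(k+1))

lemma qfac_ne_zero {q : ℂ} (hq : ‖q‖ < 1) (i : ℕ) : qfac q i ≠ 0 := by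
  refine Finset.prod_ne_zero_iff.2 fun k _ => ?_
  intro h
  have h1 : q ^ (k+1) = 1 := by linear_combination -h
  have : ‖q ^ (k+1)‖ < 1 := by
    rw [norm_pow]
    exact pow_lt_one₀ (norm_nonneg q) hq (Nat.succ_ne_zero k)
  rw [h1] at this; simp at this

/-- numerator of the Gaussian binomial -/
noncomputable def BN (q : ℂ) (m i : ℕ) : ℂ := ∏ k ∈ range i, (1 - q^(m - i + k + 1))

/-- Gaussian binomial coefficient (as a complex number). -/
noncomputable def B (q : ℂ) (m i : ℕ) : ℂ := if i ≤ m then BN q m i / qfac q i else 0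

lemma B_zero (q : ℂ) (m : ℕ) : B q m 0 = 1 := by simp [B, BN, qfac]

lemma B_self {q : ℂ} (hq : ‖q‖ < 1) (m : ℕ) : B q m m = 1 := by
  have h : BN q m m = qfac q m := by simp [BN, qfac]
  rw [B, if_pos le_rfl, h, div_self (qfac_ne_zero hq m)]

lemma BN_succ_left {q : ℂ} {m i : ℕ} (h : i ≤ m) :
    BN q (m+1) (i+1) = (1 - q^(m+1)) * BN q m i := by
  rw [BN, prod_range_succ]
  have e1 : m + 1 - (i + 1) = m - i := by omega
  have e2 : m - i + i + 1 = m + 1 := by omega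
  rw [e1, e2, BN, mul_comm]

lemma BN_succ_right {q : ℂ} {m i : ℕ} (h : i < m) :
    BN q m (i+1) = (1 - q^(m-i)) * BN q m i := by
  rw [BN, prod_range_succ']
  have e0 : m - (i+1) + 0 + 1 = m - i := by omega
  rw [e0, BN, mul_comm]
  congr 1
  refine Finset.prod_congr rfl fun j _ => ?_
  congr 2
  omega

lemma qfac_succ (q : ℂ) (i : ℕ) : qfac q (i+1) = qfac q i * (1 - q^(i+1)) := prod_range_succ _ _

lemma pascal {q : ℂ} (hq : ‖q‖ < 1) {m i : ℕ} (h : i ≤ m) :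
    B q (m+1) (i+1) = B q m (i+1) + q^(m-i) * B q m i := by
  rcases eq_or_lt_of_le h with rfl | hlt
  · rw [B_self hq, B, if_neg (by omega), B_self hq]
    simp
  · rw [B, if_pos (by omega), B, if_pos (by omega), B, if_pos (by omega),
      BN_succ_left h, BN_succ_right hlt, qfac_succ]
    have d1 := qfac_ne_zero hq i
    have d2 : (1 - q^(i+1)) ≠ 0 := by
      intro hh
      have : qfac q (i+1) = 0 := by rw [qfac_succ, hh, mul_zero]
      exact qfac_ne_zero hq (i+1) this
    have hpow : q^(m-i) * q^(i+1) = q^(m+1) := by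
      rw [← pow_add]; congr 1; omega
    field_simp
    linear_combination (BN q m i) * hpow

lemma B_gt {q : ℂ} {m i : ℕ} (h : m < i) : B q m i = 0 := by
  rw [B, if_neg (by omega)]

theorem qbt {q : ℂ} (hq : ‖q‖ < 1) (m : ℕ) (z : ℂ) :
    ∏ k ∈ range m, (1 + z * q^k) = ∑ i ∈ range (m+1), q^(TT i) * B q m i * z^i := by
  induction m with
  | zero => simp [TT, B_zero]
  | succ m ih =>
    rw [prod_range_succ, ih, mul_add, mul_one, sum_mul]
    have ext : ∑ i ∈ range (m+2), q^(TT i) * B q m i * z^i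
        = ∑ i ∈ range (m+1), q^(TT i) * B q m i * z^i := by
      rw [sum_range_succ, B_gt (by omega)]
      ring
    rw [← ext, sum_range_succ' (fun i => q^(TT i) * B q m i * z^i) (m+1),
        sum_range_succ' (fun i => q^(TT i) * B q (m+1) i * z^i) (m+1),
        add_right_comm, ← Finset.sum_add_distrib]
    congr 1
    · refine Finset.sum_congr rfl fun i hi => ?_
      have him : i ≤ m := Nat.lt_succ_iff.mp (mem_range.mp hi)
      rw [pascal hq him]
      have hp : q^(TT (i+1)) * q^(m-i) = q^(TT i) * q^m := by
        rw [← pow_add, ← pow_add]; congr 1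
        have := TT_succ i; omega
      linear_combination (-z^(i+1) * B q m i) * hp

lemma TT_two (j : ℕ) : TT j + TT j + j = j * j := by
  induction j with
  | zero => simp [TT]
  | succ j ih => rw [TT_succ]; ring_nf; ring_nf at ih; omega

lemma TT_eq_sum (n : ℕ) : TT n = ∑ k ∈ range n, k := by
  induction n with
  | zero => rfl
  | succ n ih => rw [TT_succ, sum_range_succ, ih]

/-- exponent in the recentred finite Jacobi triple product -/
def e (n i : ℕ) : ℕ := if n ≤ i then TT (i - n) else TT (n - i + 1)

lemma e_master (n i : ℕ) : e n i + (n*i + (n*n + TT n)) = 2*(n*n) + TT i := by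
  rcases le_or_gt n i with h | h
  · obtain ⟨j, rfl⟩ : ∃ j, i = n + j := ⟨i - n, by omega⟩
    rw [e, if_pos h, Nat.add_sub_cancel_left, TT_add]
    have h2 := TT_two j
    nlinarith [TT_two j]
  · obtain ⟨j, rfl⟩ : ∃ j, n = i + j := ⟨n - i, by omega⟩
    have hj : 1 ≤ j := by omega
    rw [e, if_neg (by omega)]
    have : i + j - i + 1 = j + 1 := by omega
    rw [this, TT_succ, TT_add]
    nlinarith [TT_two j]

theorem star {q : ℂ} (hq : ‖q‖ < 1) (hq0 : q ≠ 0) {n : ℕ} (hn : 1 ≤ n) (w : ℂ) :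
    ∑ i ∈ range (2*n+1), (-1)^i * q^(e n i) * B q (2*n) i * w^i
      = (1 - w) * (∏ l ∈ range n, (q^(l+1) - w)) * ∏ k ∈ range (n-1), (1 - w * q^(k+1)) := by
  have hqn : (q:ℂ)^n ≠ 0 := pow_ne_zero _ hq0
  have h := qbt hq (2*n) (-w / q^n)
  -- multiply both sides by q^(2*n*n)
  have h2 : q^(2*(n*n)) * ∏ k ∈ range (2*n), (1 + (-w / q^n) * q^k)
      = q^(2*(n*n)) * ∑ i ∈ range (2*n+1), q^(TT i) * B q (2*n) i * (-w / q^n)^i := by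
    rw [h]
  -- LHS transformation
  have hL : q^(2*(n*n)) * ∏ k ∈ range (2*n), (1 + (-w / q^n) * q^k)
      = ∏ k ∈ range (2*n), (q^n - w * q^k) := by
    have : q^(2*(n*n)) = ∏ _k ∈ range (2*n), (q:ℂ)^n := by
      rw [prod_const, card_range, ← pow_mul]
      congr 1; ring
    rw [this, ← prod_mul_distrib]
    refine prod_congr rfl fun k _ => ?_
    field_simp
    ring
  have hsplit : ∏ k ∈ range (2*n), ((q:ℂ)^n - w * q^k)
      = (q^(TT n) * ∏ l ∈ range n, (q^(l+1) - w)) *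
        (q^(n*n) * ((1 - w) * ∏ k ∈ range (n-1), (1 - w * q^(k+1)))) := by
    have h2n : 2*n = n + n := by ring
    rw [h2n, prod_range_add]
    congr 1
    · -- ∏_{k<n} (q^n - w q^k) = q^(TT n) * ∏_{l<n}(q^(l+1) - w)
      have step1 : ∀ k ∈ range n, (q:ℂ)^n - w * q^k = q^k * (q^(n-k) - w) := by
        intro k hk
        have hk' : k + (n - k) = n := by
          have := mem_range.mp hk; omega
        rw [mul_sub, ← pow_add, hk']
        ring
      rw [prod_congr rfl step1, prod_mul_distrib]
      congr 1
      · rw [prod_pow_eq_pow_sum, TT_eq_sum]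
      · rw [← prod_range_reflect]
        refine prod_congr rfl fun j hj => ?_
        have hj' : j < n := mem_range.mp hj
        congr 2
        omega
    · -- ∏_{k<n} (q^n - w q^(n+k)) = q^(n*n) * ((1-w) * ∏_{k<n-1}(1 - w q^(k+1)))
      have step2 : ∀ k ∈ range n, (q:ℂ)^n - w * q^(n+k) = q^n * (1 - w * q^k) := by
        intro k _
        rw [pow_add]; ring
      rw [prod_congr rfl step2, prod_mul_distrib, prod_const, card_range, ← pow_mul]
      congr 1
      obtain ⟨m, rfl⟩ : ∃ m, n = m + 1 := ⟨n - 1, by omega⟩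
      rw [prod_range_succ']
      simp [mul_comm]
  -- RHS transformation
  have hR : q^(2*(n*n)) * ∑ i ∈ range (2*n+1), q^(TT i) * B q (2*n) i * (-w / q^n)^i
      = (∑ i ∈ range (2*n+1), (-1)^i * q^(e n i) * B q (2*n) i * w^i) * q^(n*n + TT n) := by
    rw [mul_sum, sum_mul]
    refine sum_congr rfl fun i hi => ?_
    have hpow : (q:ℂ)^(e n i) * q^(n*i) * q^(n*n + TT n) = q^(2*(n*n)) * q^(TT i) := by
      rw [← pow_add, ← pow_add, ← pow_add]
      congr 1
      have := e_master n i
      omega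
    have hexp : (-w / q^n)^i = (-1)^i * w^i / q^(n*i) := by
      rw [div_pow, neg_pow, ← pow_mul]
    rw [hexp]
    have hqni : (q:ℂ)^(n*i) ≠ 0 := pow_ne_zero _ hq0
    field_simp
    linear_combination (-(B q (2*n) i) * w^i) * hpow
  rw [hL, hsplit] at h2
  rw [hR] at h2
  have hcan : (q:ℂ)^(n*n + TT n) ≠ 0 := pow_ne_zero _ hq0
  have harr : (q^(TT n) * ∏ l ∈ range n, (q^(l+1) - w)) *
        (q^(n*n) * ((1 - w) * ∏ k ∈ range (n-1), (1 - w * q^(k+1))))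
      = ((1 - w) * (∏ l ∈ range n, (q^(l+1) - w)) * ∏ k ∈ range (n-1), (1 - w * q^(k+1)))
          * q^(n*n + TT n) := by
    rw [pow_add]; ring
  rw [harr] at h2
  exact (mul_right_cancel₀ hcan h2).symm

theorem fci {q : ℂ} (hq : ‖q‖ < 1) (hq0 : q ≠ 0) {n : ℕ} (hn : 1 ≤ n) :
    ∑ i ∈ range (2*n+1), (-1)^i * q^(e n i) * B q (2*n) i * (i : ℂ)
      = -(∏ l ∈ range n, (q^(l+1) - 1)) * ∏ k ∈ range (n-1), (1 - q^(k+1)) := by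
  have h1 : HasDerivAt (fun w : ℂ => 1 - w) (-1) 1 := by
    simpa using (hasDerivAt_id (1:ℂ)).const_sub 1
  have h2 : HasDerivAt (fun w : ℂ => ∏ l ∈ range n, (q^(l+1) - w))
      (∑ l ∈ range n, (∏ j ∈ (range n).erase l, (q^(j+1) - 1)) * (-1)) 1 := by
    have := HasDerivAt.fun_finsetProd (u := range n)
      (f := fun l (w : ℂ) => q^(l+1) - w) (f' := fun _ => -1) (x := (1:ℂ))
      (fun l _ => by simpa using (hasDerivAt_id (1:ℂ)).const_sub (q^(l+1)))
    simpa using this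
  have h3 : HasDerivAt (fun w : ℂ => ∏ k ∈ range (n-1), (1 - w * q^(k+1)))
      (∑ k ∈ range (n-1), (∏ j ∈ (range (n-1)).erase k, (1 - q^(j+1))) * (-(q^(k+1)))) 1 := by
    have := HasDerivAt.fun_finsetProd (u := range (n-1))
      (f := fun k (w : ℂ) => 1 - w * q^(k+1)) (f' := fun k => -(q^(k+1))) (x := (1:ℂ))
      (fun k _ => by simpa using ((hasDerivAt_id (1:ℂ)).mul_const (q^(k+1))).const_sub 1)
    simpa using this
  have hP := (h1.mul h2).mul h3
  have hfun : (fun w : ℂ => ∑ i ∈ range (2*n+1), (-1)^i * q^(e n i) * B q (2*n) i * w^i)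
      = (fun w : ℂ => (1 - w) * (∏ l ∈ range n, (q^(l+1) - w)) * ∏ k ∈ range (n-1), (1 - w * q^(k+1))) :=
    funext (star hq hq0 hn)
  have hS : HasDerivAt (fun w : ℂ => ∑ i ∈ range (2*n+1), (-1)^i * q^(e n i) * B q (2*n) i * w^i)
      (∑ i ∈ range (2*n+1), (-1)^i * q^(e n i) * B q (2*n) i * (i * (1:ℂ)^(i-1))) 1 := by
    refine HasDerivAt.fun_sum fun i _ => ?_
    exact (hasDerivAt_pow i 1).const_mul _
  rw [hfun] at hS
  have := hS.unique hP
  calc ∑ i ∈ range (2*n+1), (-1)^i * q^(e n i) * B q (2*n) i * (i:ℂ)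
      = ∑ i ∈ range (2*n+1), (-1)^i * q^(e n i) * B q (2*n) i * (i * (1:ℂ)^(i-1)) := by
        refine sum_congr rfl fun i _ => by simp
    _ = _ := by
        rw [this]
        simp

open Filter Topology

noncomputable def Pinf (q : ℂ) : ℂ := ∏' k : ℕ, (1 - q^(k+1))

lemma factor_ne_zero {q : ℂ} (hq : ‖q‖ < 1) (k : ℕ) : (1 : ℂ) - q^(k+1) ≠ 0 := by
  intro h
  have h1 : q ^ (k+1) = 1 := by linear_combination -h
  have : ‖q ^ (k+1)‖ < 1 := by
    rw [norm_pow]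
    exact pow_lt_one₀ (norm_nonneg q) hq (Nat.succ_ne_zero k)
  rw [h1] at this; simp at this

lemma summable_log {q : ℂ} (hq : ‖q‖ < 1) :
    Summable fun k : ℕ => Complex.log (1 - q^(k+1)) := by
  have hgeom : Summable fun k : ℕ => (3/2 : ℝ) * (‖q‖)^(k+1) := by
    apply Summable.mul_left
    exact (summable_geometric_of_lt_one (norm_nonneg q) hq).comp_injective
      (add_left_injective 1)
  apply Summable.of_norm_bounded_eventually_nat hgeom
  have h0 : Tendsto (fun k : ℕ => (‖q‖)^(k+1)) atTop (𝓝 0) := by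
    exact (tendsto_pow_atTop_nhds_zero_of_lt_one (norm_nonneg q) hq).comp
      (tendsto_add_atTop_nat 1)
  filter_upwards [h0.eventually (eventually_le_nhds (by norm_num : (0:ℝ) < 1/2))] with k hk
  have hz : ‖-q^(k+1)‖ ≤ 1/2 := by
    rwa [norm_neg, norm_pow]
  have := Complex.norm_log_one_add_half_le_self hz
  rw [show (1 : ℂ) + -q^(k+1) = 1 - q^(k+1) by ring] at this
  calc ‖Complex.log (1 - q^(k+1))‖ ≤ 3/2 * ‖-q^(k+1)‖ := this
    _ = 3/2 * (‖q‖)^(k+1) := by rw [norm_neg, norm_pow]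

lemma multipliable_fac {q : ℂ} (hq : ‖q‖ < 1) :
    Multipliable fun k : ℕ => (1 : ℂ) - q^(k+1) := by
  have := Complex.multipliable_of_summable_log (summable_log hq)
  exact this

lemma Pinf_ne_zero {q : ℂ} (hq : ‖q‖ < 1) : Pinf q ≠ 0 := by
  have h2 := Complex.cexp_tsum_eq_tprod (f := fun k => (1 : ℂ) - q^(k+1))
    (fun k => factor_ne_zero hq k) (summable_log hq)
  rw [Pinf, ← h2]
  exact Complex.exp_ne_zero _

lemma qfac_tendsto {q : ℂ} (hq : ‖q‖ < 1) :
    Tendsto (qfac q) atTop (𝓝 (Pinf q)) :=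
  (multipliable_fac hq).hasProd.tendsto_prod_nat

lemma exists_bounds {q : ℂ} (hq : ‖q‖ < 1) :
    ∃ C c : ℝ, 0 < c ∧ (∀ j, ‖qfac q j‖ ≤ C) ∧ (∀ j, c ≤ ‖qfac q j‖) := by
  have habs : Tendsto (fun j => ‖qfac q j‖) atTop (𝓝 (‖Pinf q‖)) :=
    (continuous_norm.continuousAt).tendsto.comp (qfac_tendsto hq)
  have hpos : 0 < ‖Pinf q‖ := by
    simpa using (norm_pos_iff.mpr (Pinf_ne_zero hq))
  obtain ⟨K, hK⟩ := eventually_atTop.mp (habs.eventually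
    (eventually_ge_nhds (by linarith : ‖Pinf q‖ / 2 < ‖Pinf q‖)))
  obtain ⟨C, hC⟩ := habs.bddAbove_range
  have hCall : ∀ j, ‖qfac q j‖ ≤ C := fun j => hC (Set.mem_range_self j)
  have hne : ((range (K+1)).image fun j => ‖qfac q j‖).Nonempty := by simp
  set c₀ := (((range (K+1)).image fun j => ‖qfac q j‖)).min' hne with hc₀
  have hc₀pos : 0 < c₀ := by
    obtain ⟨j, _, hj⟩ := Finset.mem_image.mp (Finset.min'_mem _ hne)
    rw [hc₀, ← hj]
    exact norm_pos_iff.mpr (qfac_ne_zero hq j)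
  refine ⟨C, min c₀ (‖Pinf q‖ / 2), by positivity, hCall, fun j => ?_⟩
  rcases le_or_gt j K with h | h
  · exact le_trans (min_le_left _ _)
      (Finset.min'_le _ _ (Finset.mem_image.mpr ⟨j, by simp [Nat.lt_succ_iff, h], rfl⟩))
  · exact le_trans (min_le_right _ _) (hK j (by omega))

lemma Zzero {q : ℂ} (hq : ‖q‖ < 1) (hq0 : q ≠ 0) {n : ℕ} (hn : 1 ≤ n) :
    ∑ i ∈ range (2*n+1), (-1)^i * q^(e n i) * B q (2*n) i = 0 := by
  have h := star hq hq0 hn 1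
  simp only [one_pow, mul_one, sub_self, zero_mul] at h
  simpa using h

lemma neg_one_pow_sub_c {m n : ℕ} (h : m ≤ n) : ((-1 : ℂ))^(n-m) = (-1)^(n+m) := by
  have : n + m = (n - m) + 2*m := by omega
  rw [this, pow_add, pow_mul]
  norm_num

lemma fci3 {q : ℂ} (hq : ‖q‖ < 1) (hq0 : q ≠ 0) {n : ℕ} (hn : 1 ≤ n) :
    ∑ i ∈ range (2*n+1), (-1)^i * q^(e n i) * B q (2*n) i * ((i:ℂ) - n)
      = (-1)^(n+1) * (qfac q n * qfac q (n-1)) := by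
  have h1 := fci hq hq0 hn
  have h2 := Zzero hq hq0 hn
  have hsplit : ∑ i ∈ range (2*n+1), (-1)^i * q^(e n i) * B q (2*n) i * ((i:ℂ) - n)
      = (∑ i ∈ range (2*n+1), (-1)^i * q^(e n i) * B q (2*n) i * (i:ℂ))
        - n * ∑ i ∈ range (2*n+1), (-1)^i * q^(e n i) * B q (2*n) i := by
    rw [mul_sum, ← sum_sub_distrib]
    exact sum_congr rfl fun i _ => by ring
  rw [hsplit, h2, h1]
  have hprod : ∏ l ∈ range n, (q^(l+1) - 1) = (-1)^n * qfac q n := by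
    have : ∀ l ∈ range n, q^(l+1) - 1 = (-1) * (1 - q^(l+1)) := fun l _ => by ring
    rw [prod_congr rfl this, prod_mul_distrib, prod_const, card_range, qfac]
  rw [hprod]
  rw [show (∏ k ∈ range (n-1), (1 - q^(k+1))) = qfac q (n-1) from rfl]
  ring

lemma fci4 {q : ℂ} (hq : ‖q‖ < 1) (hq0 : q ≠ 0) {n : ℕ} (hn : 1 ≤ n) :
    (∑ m ∈ range (n+1), (-1)^m * (m:ℂ) * q^(TT (m+1)) * B q (2*n) (n-m))
      + ∑ k ∈ range n, (-1)^k * ((k:ℂ)+1) * q^(TT (k+1)) * B q (2*n) (n+1+k)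
      = qfac q n * qfac q (n-1) := by
  have h3 := fci3 hq hq0 hn
  rw [show 2*n+1 = (n+1) + n by omega,
    sum_range_add (fun i => (-1)^i * q^(e n i) * B q (2*n) i * ((i:ℂ) - n))] at h3
  rw [← sum_range_reflect (fun i => (-1)^i * q^(e n i) * B q (2*n) i * ((i:ℂ) - n)) (n+1)] at h3
  have e1 : ∀ m ∈ range (n+1), (-1)^(n+1-1-m) * q^(e n (n+1-1-m)) * B q (2*n) (n+1-1-m) * (((n+1-1-m : ℕ):ℂ) - n)
      = (-1)^(n+1) * ((-1)^m * (m:ℂ) * q^(TT (m+1)) * B q (2*n) (n-m)) := by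
    intro m hm
    have hmn : m ≤ n := Nat.lt_succ_iff.mp (mem_range.mp hm)
    have hred : n+1-1-m = n-m := by omega
    rw [hred]
    rcases Nat.eq_zero_or_pos m with rfl | hmpos
    · simp [Nat.sub_zero, sub_self]
    · have hcast : ((n-m : ℕ) : ℂ) = (n:ℂ) - m := by
        push_cast [Nat.cast_sub hmn]; ring
      have hee : e n (n-m) = TT (m+1) := by
        simp only [e]
        rw [if_neg (by omega)]
        congr 1
        omega
      rw [hcast, hee, neg_one_pow_sub_c hmn, pow_add]
      ring
  have e2 : ∀ k ∈ range n, (-1)^(n+1+k) * q^(e n (n+1+k)) * B q (2*n) (n+1+k) * (((n+1+k : ℕ):ℂ) - n)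
      = (-1)^(n+1) * ((-1)^k * ((k:ℂ)+1) * q^(TT (k+1)) * B q (2*n) (n+1+k)) := by
    intro k _
    have hee : e n (n+1+k) = TT (k+1) := by
      simp only [e]
      rw [if_pos (by omega)]
      congr 1
      omega
    rw [hee, pow_add, pow_add]
    push_cast
    ring
  rw [sum_congr rfl e1, sum_congr rfl e2, ← mul_sum, ← mul_sum, ← mul_add] at h3
  exact mul_left_cancel₀ (pow_ne_zero _ (by norm_num : (-1:ℂ) ≠ 0)) h3

lemma qfac_split (q : ℂ) {i m : ℕ} (h : i ≤ m) :
    qfac q m = qfac q (m-i) * BN q m i := by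
  have : qfac q m = ∏ k ∈ range ((m-i)+i), (1 - q^(k+1)) := by
    rw [qfac, Nat.sub_add_cancel h]
  rw [this, prod_range_add]
  rfl

lemma B_eq {q : ℂ} (hq : ‖q‖ < 1) {i m : ℕ} (h : i ≤ m) :
    B q m i = qfac q m / (qfac q (m-i) * qfac q i) := by
  rw [B, if_pos h, qfac_split q h, mul_div_mul_left _ _ (qfac_ne_zero hq (m-i))]

lemma B_bound {q : ℂ} (hq : ‖q‖ < 1) :
    ∃ CB : ℝ, 0 ≤ CB ∧ ∀ m i, ‖B q m i‖ ≤ CB := by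
  obtain ⟨C, c, hc, hC, hcl⟩ := exists_bounds hq
  have hCpos : 0 < C := lt_of_lt_of_le hc (le_trans (hcl 0) (hC 0))
  refine ⟨C / (c*c), by positivity, fun m i => ?_⟩
  rcases le_or_gt i m with h | h
  · rw [B_eq hq h]
    rw [norm_div, norm_mul]
    apply div_le_div₀ hCpos.le (hC m) (by positivity)
    exact mul_le_mul (hcl _) (hcl _) hc.le (le_trans hc.le (hcl _))
  · rw [B_gt h]
    simp
    positivity

lemma tendsto_qfac_comp {q : ℂ} (hq : ‖q‖ < 1) {a : ℕ → ℕ}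
    (ha : Tendsto a atTop atTop) :
    Tendsto (fun n => qfac q (a n)) atTop (𝓝 (Pinf q)) :=
  (qfac_tendsto hq).comp ha

lemma Pinf_div_sq {q : ℂ} (hq : ‖q‖ < 1) :
    Pinf q / (Pinf q * Pinf q) = (Pinf q)⁻¹ := by
  field_simp

lemma B_tendsto₁ {q : ℂ} (hq : ‖q‖ < 1) (m : ℕ) :
    Tendsto (fun n => B q (2*n) (n-m)) atTop (𝓝 ((Pinf q)⁻¹)) := by
  have key : ∀ᶠ n in atTop, qfac q (2*n) / (qfac q (n+m) * qfac q (n-m)) = B q (2*n) (n-m) := by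
    filter_upwards [eventually_ge_atTop m] with n hn
    rw [B_eq hq (by omega : n-m ≤ 2*n)]
    have : 2*n - (n-m) = n+m := by omega
    rw [this]
  have h1 : Tendsto (fun n => qfac q (2*n) / (qfac q (n+m) * qfac q (n-m))) atTop
      (𝓝 (Pinf q / (Pinf q * Pinf q))) := by
    refine Tendsto.div ?_ (Tendsto.mul ?_ ?_)
      (mul_ne_zero (Pinf_ne_zero hq) (Pinf_ne_zero hq)) <;>
    · apply tendsto_qfac_comp hq
      exact tendsto_atTop_atTop.mpr fun b => ⟨b + 2*m + 2, fun a ha => by omega⟩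
  rw [Pinf_div_sq hq] at h1
  exact h1.congr' key

lemma B_tendsto₂ {q : ℂ} (hq : ‖q‖ < 1) (k : ℕ) :
    Tendsto (fun n => B q (2*n) (n+1+k)) atTop (𝓝 ((Pinf q)⁻¹)) := by
  have key : ∀ᶠ n in atTop, qfac q (2*n) / (qfac q (n-(1+k)) * qfac q (n+1+k)) = B q (2*n) (n+1+k) := by
    filter_upwards [eventually_ge_atTop (k+1)] with n hn
    rw [B_eq hq (by omega : n+1+k ≤ 2*n)]
    have : 2*n - (n+1+k) = n-(1+k) := by omega
    rw [this]
  have h1 : Tendsto (fun n => qfac q (2*n) / (qfac q (n-(1+k)) * qfac q (n+1+k))) atTop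
      (𝓝 (Pinf q / (Pinf q * Pinf q))) := by
    refine Tendsto.div ?_ (Tendsto.mul ?_ ?_)
      (mul_ne_zero (Pinf_ne_zero hq) (Pinf_ne_zero hq)) <;>
    · apply tendsto_qfac_comp hq
      exact tendsto_atTop_atTop.mpr fun b => ⟨b + 2*k + 2, fun a ha => by omega⟩
  rw [Pinf_div_sq hq] at h1
  exact h1.congr' key

lemma TT_ge (m : ℕ) : m ≤ TT (m+1) := by
  have := TT_succ m; omega

lemma summable_base {r : ℝ} (hr0 : 0 ≤ r) (hr1 : r < 1) :
    Summable (fun m : ℕ => (2*(m:ℝ)+2) * r^(TT (m+1))) := by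
  have hbase : Summable (fun m : ℕ => 2*((m:ℝ)*r^m) + 2*r^m) := by
    refine Summable.add (Summable.mul_left 2 ?_) (Summable.mul_left 2 ?_)
    · have := summable_pow_mul_geometric_of_norm_lt_one 1 (by rwa [Real.norm_eq_abs, abs_of_nonneg hr0] : ‖r‖ < 1)
      simpa using this
    · exact summable_geometric_of_lt_one hr0 hr1
  refine Summable.of_nonneg_of_le (fun m => by positivity) (fun m => ?_) hbase
  have h1 : r^(TT (m+1)) ≤ r^m := pow_le_pow_of_le_one hr0 hr1.le (TT_ge m)
  nlinarith [pow_nonneg hr0 m, pow_nonneg hr0 (TT (m+1))]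

theorem jacobi_cube {q : ℂ} (hq : ‖q‖ < 1) :
    ∑' m : ℕ, (-1)^m * (2*(m:ℂ)+1) * q^(TT (m+1)) = (Pinf q)^3 := by
  rcases eq_or_ne q 0 with rfl | hq0
  · have hP : Pinf (0:ℂ) = 1 := by
      rw [Pinf]
      convert tprod_one with k
      simp
    rw [hP, tsum_eq_single 0]
    · simp [TT]
    · intro m hm
      have : TT (m+1) ≠ 0 := by have := TT_ge m; omega
      simp [zero_pow this]
  · obtain ⟨CB, hCB0, hCB⟩ := B_bound hq
    set r := ‖q‖ with hrdef
    have hr0 : 0 ≤ r := norm_nonneg q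
    have hr1 : r < 1 := hq
    set P := Pinf q with hPdef
    have hP0 : P ≠ 0 := Pinf_ne_zero hq
    set bound : ℕ → ℝ := fun m => (2*(m:ℝ)+2) * CB * r^(TT (m+1)) with hbdef
    have hbound_sum : Summable bound := by
      have := (summable_base hr0 hr1).mul_left CB
      refine this.congr fun m => ?_
      simp only [hbdef]; ring
    have hnorm : ∀ (sc b : ℂ) (m : ℕ), ‖sc‖ ≤ 2*(m:ℝ)+2 → ‖b‖ ≤ CB →
        ‖sc * q^(TT (m+1)) * b‖ ≤ bound m := by
      intro sc b m hs hb
      rw [norm_mul, norm_mul, norm_pow]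
      have h1 : ‖sc‖ * r^(TT (m+1)) ≤ (2*(m:ℝ)+2) * r^(TT (m+1)) :=
        mul_le_mul_of_nonneg_right hs (by positivity)
      calc ‖sc‖ * r^(TT (m+1)) * ‖b‖
          ≤ (2*(m:ℝ)+2) * r^(TT (m+1)) * CB :=
            mul_le_mul h1 hb (norm_nonneg b) (by positivity)
        _ = bound m := by simp only [hbdef]; ring
    have habs_s1 : ∀ m : ℕ, ‖(-1)^m * (m:ℂ)‖ ≤ 2*(m:ℝ)+2 := by
      intro m
      rw [norm_mul, norm_pow]
      simp only [norm_neg, norm_one, one_pow, one_mul, Complex.norm_natCast]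
      push_cast; linarith
    have habs_s2 : ∀ m : ℕ, ‖(-1)^m * ((m:ℂ)+1)‖ ≤ 2*(m:ℝ)+2 := by
      intro m
      rw [norm_mul, norm_pow]
      simp only [norm_neg, norm_one, one_pow, one_mul]
      have : ‖(m:ℂ)+1‖ = (m:ℝ)+1 := by
        rw [show ((m:ℂ)+1) = ((m+1 : ℕ) : ℂ) by push_cast; ring, Complex.norm_natCast]
        push_cast; ring
      rw [this]; linarith
    set F₁ : ℕ → ℕ → ℂ := fun n m =>
      if m < n+1 then ((-1)^m * (m:ℂ) * q^(TT (m+1))) * B q (2*n) (n-m) else 0 with hF₁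
    set F₂ : ℕ → ℕ → ℂ := fun n k =>
      if k < n then ((-1)^k * ((k:ℂ)+1) * q^(TT (k+1))) * B q (2*n) (n+1+k) else 0 with hF₂
    have hpt₁ : ∀ m : ℕ, Tendsto (fun n => F₁ n m) atTop
        (𝓝 (((-1)^m * (m:ℂ) * q^(TT (m+1))) * P⁻¹)) := by
      intro m
      have h := (B_tendsto₁ hq m).const_mul ((-1)^m * (m:ℂ) * q^(TT (m+1)))
      refine h.congr' ?_
      filter_upwards [eventually_ge_atTop m] with n hn
      simp only [hF₁, if_pos (by omega : m < n+1)]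
    have hpt₂ : ∀ k : ℕ, Tendsto (fun n => F₂ n k) atTop
        (𝓝 (((-1)^k * ((k:ℂ)+1) * q^(TT (k+1))) * P⁻¹)) := by
      intro k
      have h := (B_tendsto₂ hq k).const_mul ((-1)^k * ((k:ℂ)+1) * q^(TT (k+1)))
      refine h.congr' ?_
      filter_upwards [eventually_ge_atTop (k+1)] with n hn
      simp only [hF₂, if_pos (by omega : k < n)]
    have hb₁ : ∀ n m, ‖F₁ n m‖ ≤ bound m := by
      intro n m
      simp only [hF₁]
      split_ifs with h
      · rw [show ((-1:ℂ))^m * (m:ℂ) * q^(TT (m+1)) * B q (2*n) (n-m)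
            = ((-1)^m * (m:ℂ)) * q^(TT (m+1)) * (B q (2*n) (n-m)) from by ring]
        exact hnorm _ _ m (habs_s1 m) (hCB _ _)
      · simp only [norm_zero]
        positivity
    have hb₂ : ∀ n k, ‖F₂ n k‖ ≤ bound k := by
      intro n k
      simp only [hF₂]
      split_ifs with h
      · rw [show ((-1:ℂ))^k * ((k:ℂ)+1) * q^(TT (k+1)) * B q (2*n) (n+1+k)
            = ((-1)^k * ((k:ℂ)+1)) * q^(TT (k+1)) * (B q (2*n) (n+1+k)) from by ring]
        exact hnorm _ _ k (habs_s2 k) (hCB _ _)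
      · simp only [norm_zero]
        positivity
    have htsum₁ := tendsto_tsum_of_dominated_convergence hbound_sum hpt₁
      (Filter.Eventually.of_forall hb₁)
    have htsum₂ := tendsto_tsum_of_dominated_convergence hbound_sum hpt₂
      (Filter.Eventually.of_forall hb₂)
    have hsum := htsum₁.add htsum₂
    have hfin : (fun n => qfac q n * qfac q (n-1)) =ᶠ[atTop]
        (fun n => (∑' m, F₁ n m) + (∑' k, F₂ n k)) := by
      filter_upwards [eventually_ge_atTop 1] with n hn1
      have t₁ : ∑' m, F₁ n m = ∑ m ∈ range (n+1), (-1)^m * (m:ℂ) * q^(TT (m+1)) * B q (2*n) (n-m) := by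
        rw [tsum_eq_sum (s := range (n+1)) (fun m hm => by
          simp only [hF₁]
          rw [if_neg (by simpa using hm)])]
        refine sum_congr rfl fun m hm => ?_
        simp only [hF₁]
        rw [if_pos (mem_range.mp hm)]
      have t₂ : ∑' k, F₂ n k = ∑ k ∈ range n, (-1)^k * ((k:ℂ)+1) * q^(TT (k+1)) * B q (2*n) (n+1+k) := by
        rw [tsum_eq_sum (s := range n) (fun k hk => by
          simp only [hF₂]
          rw [if_neg (by simpa using hk)])]
        refine sum_congr rfl fun k hk => ?_
        simp only [hF₂]
        rw [if_pos (mem_range.mp hk)]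
      rw [t₁, t₂, fci4 hq hq0 hn1]
    have hRHS : Tendsto (fun n => qfac q n * qfac q (n-1)) atTop (𝓝 (P * P)) := by
      refine Tendsto.mul (qfac_tendsto hq) (tendsto_qfac_comp hq ?_)
      exact tendsto_atTop_atTop.mpr fun b => ⟨b + 1, fun a ha => by omega⟩
    have hlim := hRHS.congr' hfin
    have huniq := tendsto_nhds_unique hsum hlim
    -- summability of the limit families
    have hsgen : ∀ (c : ℂ) (s : ℕ → ℂ), (∀ m, ‖s m‖ ≤ 2*(m:ℝ)+2) →
        Summable (fun m => s m * q^(TT (m+1)) * c) := by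
      intro c s hs
      refine Summable.of_norm_bounded
        (g := fun m => (2*(m:ℝ)+2) * r^(TT (m+1)) * ‖c‖)
        (((summable_base hr0 hr1).mul_right _)) fun m => ?_
      rw [norm_mul, norm_mul, norm_pow]
      refine mul_le_mul (mul_le_mul_of_nonneg_right (hs m) (by positivity)) le_rfl
        (norm_nonneg c) (by positivity)
    have hs₁ : Summable (fun m : ℕ => ((-1)^m * (m:ℂ) * q^(TT (m+1))) * P⁻¹) := by
      have := hsgen P⁻¹ (fun m => (-1)^m * (m:ℂ)) habs_s1
      refine this.congr fun m => by ring
    have hs₂ : Summable (fun m : ℕ => ((-1)^m * ((m:ℂ)+1) * q^(TT (m+1))) * P⁻¹) := by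
      have := hsgen P⁻¹ (fun m => (-1)^m * ((m:ℂ)+1)) habs_s2
      refine this.congr fun m => by ring
    have key : (∑' m : ℕ, (-1)^m * (2*(m:ℂ)+1) * q^(TT (m+1))) * P⁻¹ = P * P := by
      rw [← tsum_mul_right]
      rw [show (fun m : ℕ => (-1)^m * (2*(m:ℂ)+1) * q^(TT (m+1)) * P⁻¹)
          = (fun m : ℕ => ((-1)^m * (m:ℂ) * q^(TT (m+1))) * P⁻¹
            + ((-1)^m * ((m:ℂ)+1) * q^(TT (m+1))) * P⁻¹) from funext fun m => by ring]
      rw [Summable.tsum_add hs₁ hs₂]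
      exact huniq
    have : (∑' m : ℕ, (-1)^m * (2*(m:ℂ)+1) * q^(TT (m+1))) = P * P * P := by
      have h2 := congrArg (· * P) key
      simpa [mul_assoc, inv_mul_cancel₀ hP0] using h2
    rw [this]; ring

section gen
variable {q : ℂ}

lemma gfactor_ne_zero (hq : ‖q‖ < 1) (ee : ℕ → ℕ) (he : ∀ k, k+1 ≤ ee k) (k : ℕ) : (1 : ℂ) - q^(ee k) ≠ 0 := by
  intro h
  have h1 : q ^ (ee k) = 1 := by linear_combination -h
  have : ‖q ^ (ee k)‖ < 1 := by
    rw [norm_pow]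
    exact pow_lt_one₀ (norm_nonneg q) hq (by have := he k; omega)
  rw [h1] at this; simp at this

lemma gsummable_log (hq : ‖q‖ < 1) (ee : ℕ → ℕ) (he : ∀ k, k+1 ≤ ee k) : Summable fun k : ℕ => Complex.log (1 - q^(ee k)) := by
  have hgeom : Summable fun k : ℕ => (3/2 : ℝ) * (‖q‖)^(k+1) := by
    apply Summable.mul_left
    exact (summable_geometric_of_lt_one (norm_nonneg q) hq).comp_injective
      (add_left_injective 1)
  apply Summable.of_norm_bounded_eventually_nat hgeom
  have h0 : Tendsto (fun k : ℕ => (‖q‖)^(k+1)) atTop (𝓝 0) :=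
    (tendsto_pow_atTop_nhds_zero_of_lt_one (norm_nonneg q) hq).comp
      (tendsto_add_atTop_nat 1)
  filter_upwards [h0.eventually (eventually_le_nhds (by norm_num : (0:ℝ) < 1/2))] with k hk
  have hle : (‖q‖)^(ee k) ≤ (‖q‖)^(k+1) :=
    pow_le_pow_of_le_one (norm_nonneg q) hq.le (he k)
  have hz : ‖-q^(ee k)‖ ≤ 1/2 := by
    rw [norm_neg, norm_pow]
    exact le_trans hle hk
  have hlog := Complex.norm_log_one_add_half_le_self hz
  rw [show (1 : ℂ) + -q^(ee k) = 1 - q^(ee k) by ring] at hlog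
  calc ‖Complex.log (1 - q^(ee k))‖ ≤ 3/2 * ‖-q^(ee k)‖ := hlog
    _ = 3/2 * (‖q‖)^(ee k) := by rw [norm_neg, norm_pow]
    _ ≤ 3/2 * (‖q‖)^(k+1) := by linarith

lemma gmultipliable (hq : ‖q‖ < 1) (ee : ℕ → ℕ) (he : ∀ k, k+1 ≤ ee k) : Multipliable fun k : ℕ => (1 : ℂ) - q^(ee k) :=
  Complex.multipliable_of_summable_log (gsummable_log hq ee he)

lemma gtprod_ne_zero (hq : ‖q‖ < 1) (ee : ℕ → ℕ) (he : ∀ k, k+1 ≤ ee k) : (∏' k : ℕ, ((1 : ℂ) - q^(ee k))) ≠ 0 := by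
  have h2 := Complex.cexp_tsum_eq_tprod (f := fun k => (1 : ℂ) - q^(ee k))
    (fun k => gfactor_ne_zero hq ee he k) (gsummable_log hq ee he)
  rw [← h2]
  exact Complex.exp_ne_zero _

end gen

lemma HasProd.div_c {u v : ℕ → ℂ} {a b : ℂ} (hu : HasProd u a) (hv : HasProd v b) (hb : b ≠ 0) :
    HasProd (fun n => u n / v n) (a / b) := by
  have h := Tendsto.div hu hv hb
  refine Tendsto.congr (fun s => ?_) h
  simp [Finset.prod_div_distrib]

lemma hasProd_cube {u : ℕ → ℂ} {a : ℂ} (hu : HasProd u a) :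
    HasProd (fun n => u n ^ 3) (a ^ 3) := by
  have h := (hu.mul hu).mul hu
  have e1 : (fun n => u n * u n * u n) = fun n => u n ^ 3 := funext fun n => by ring
  have e2 : a * a * a = a ^ 3 := by ring
  rwa [e1, e2] at h

lemma sq_odd_div8 (m : ℕ) : ((2*m+1)^2 - 1)/8 = TT (m+1) := by
  have h := TT_two (m+1)
  have hsq : (2*m+1)^2 + 4*(m+1) = 4*((m+1)*(m+1)) + 1 := by ring
  generalize hA : (m+1)*(m+1) = A at h hsq
  generalize hB : (2*m+1)^2 = Bv at hsq ⊢
  omega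

lemma kron_odd (m : ℕ) : ((kronNegTwo (2*m+1) : ℤ) : ℂ) = (-1)^(m + TT (m+1)) := by
  obtain ⟨j, s, hs, rfl⟩ : ∃ j s, s < 4 ∧ m = 4*j+s := by
    exact ⟨m/4, m%4, Nat.mod_lt _ (by norm_num), by omega⟩
  have ht := TT_two (4*j)
  have ht16 : (4*j)*(4*j) = 16*(j*j) := by ring
  rw [ht16] at ht
  have hadd : TT (4*j + (s+1)) = TT (4*j) + TT (s+1) + (4*j)*(s+1) := TT_add _ _
  have hidx : 4*j+s+1 = 4*j+(s+1) := by omega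
  interval_cases s
  · -- s = 0 : kron(8j+1)=1, exponent even
    have hmod : (2*(4*j+0)+1) % 8 = 1 := by omega
    have hpar : (4*j+0 + TT (4*j+0+1)) % 2 = 0 := by
      rw [hidx, hadd]
      simp only [TT] at *
      generalize hA : j*j = A at ht
      omega
    rw [kronNegTwo, if_pos (Or.inl hmod)]
    rw [(Nat.even_iff.mpr hpar).neg_one_pow]
    norm_num
  · have hmod : (2*(4*j+1)+1) % 8 = 3 := by omega
    have hpar : (4*j+1 + TT (4*j+1+1)) % 2 = 0 := by
      rw [hidx, hadd]
      simp only [TT] at *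
      generalize hA : j*j = A at ht
      omega
    rw [kronNegTwo, if_pos (Or.inr hmod)]
    rw [(Nat.even_iff.mpr hpar).neg_one_pow]
    norm_num
  · have hmod : (2*(4*j+2)+1) % 8 = 5 := by omega
    have hpar : (4*j+2 + TT (4*j+2+1)) % 2 = 1 := by
      rw [hidx, hadd]
      simp only [TT] at *
      generalize hA : j*j = A at ht
      omega
    rw [kronNegTwo, if_neg (by omega), if_pos (Or.inl hmod)]
    rw [(Nat.odd_iff.mpr hpar).neg_one_pow]
    norm_num
  · have hmod : (2*(4*j+3)+1) % 8 = 7 := by omega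
    have hpar : (4*j+3 + TT (4*j+3+1)) % 2 = 1 := by
      rw [hidx, hadd]
      simp only [TT] at *
      generalize hA : j*j = A at ht
      omega
    rw [kronNegTwo, if_neg (by omega), if_pos (Or.inr hmod)]
    rw [(Nat.odd_iff.mpr hpar).neg_one_pow]
    norm_num

lemma kron_even {n : ℕ} (hn : n % 2 = 0) : kronNegTwo n = 0 := by
  rw [kronNegTwo, if_neg (by omega), if_neg (by omega)]

theorem sum_side {q : ℂ} (hq : ‖q‖ < 1) :
    ∑' n : ℕ, ((kronNegTwo n : ℂ) * (n : ℂ) * q ^ ((n^2 - 1) / 8))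
      = ∑' m : ℕ, (-1)^m * (2*(m:ℂ)+1) * (-q)^(TT (m+1)) := by
  have hinj : Function.Injective (fun m : ℕ => 2*m+1) := by
    intro a b h
    have h2 : 2*a+1 = 2*b+1 := h
    omega
  have hsupp : Function.support (fun n : ℕ => (kronNegTwo n : ℂ) * (n : ℂ) * q ^ ((n^2 - 1) / 8))
      ⊆ Set.range (fun m : ℕ => 2*m+1) := by
    intro n hn
    rcases Nat.even_or_odd n with he | ho
    · exfalso
      apply hn
      show ((kronNegTwo n : ℂ)) * (n:ℂ) * q^((n^2-1)/8) = 0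
      rw [kron_even (Nat.even_iff.mp he)]
      simp
    · refine ⟨n/2, ?_⟩
      have := Nat.odd_iff.mp ho
      show 2*(n/2)+1 = n
      omega
  have := Function.Injective.tsum_eq hinj hsupp
  rw [← this]
  refine tsum_congr fun m => ?_
  show (kronNegTwo (2*m+1) : ℂ) * ((2*m+1 : ℕ) : ℂ) * q ^ (((2*m+1)^2 - 1)/8) = _
  rw [sq_odd_div8 m, kron_odd m]
  have hcast : ((2*m+1 : ℕ) : ℂ) = 2*(m:ℂ)+1 := by push_cast; ring
  rw [hcast, pow_add, neg_pow q (TT (m+1))]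
  ring

lemma split_parity {q : ℂ} (hq : ‖q‖ < 1) :
    Pinf q = (∏' k : ℕ, (1 - q^(2*k+1))) * Pinf (q^2) := by
  have hq2 : ‖q^2‖ < 1 := by
    rw [norm_pow]
    exact pow_lt_one₀ (norm_nonneg q) hq (by norm_num)
  have hodd : Multipliable (fun k : ℕ => (1:ℂ) - q^(2*k+1)) :=
    gmultipliable hq (fun k => 2*k+1) (fun k => by show k+1 ≤ 2*k+1; omega)
  have heven2 : Multipliable (fun k : ℕ => (1:ℂ) - (q^2)^(k+1)) := multipliable_fac hq2
  have hexp : ∀ k : ℕ, ((1:ℂ) - (q^2)^(k+1)) = 1 - q^(2*k+1+1) := by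
    intro k
    have h : 2*k+1+1 = 2*(k+1) := by ring
    rw [h, pow_mul]
  have hkey := tprod_even_mul_odd (f := fun k : ℕ => (1:ℂ) - q^(k+1))
    hodd (heven2.congr hexp)
  rw [Pinf, ← hkey]
  congr 1
  rw [Pinf]
  exact (tprod_congr hexp).symm
theorem prod_side {q : ℂ} (hq : ‖q‖ < 1) :
    (∏' n : ℕ, (1 - q ^ (2*(n+1)))^9 / ((1 - q ^ (n+1))^3 * (1 - q ^ (4*(n+1)))^3))
      = (Pinf (-q))^3 := by
  have hr0 := norm_nonneg q
  have hq2 : ‖q^2‖ < 1 := by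
    rw [norm_pow]; exact pow_lt_one₀ hr0 hq (by norm_num)
  have hq4 : ‖q^4‖ < 1 := by
    rw [norm_pow]; exact pow_lt_one₀ hr0 hq (by norm_num)
  have hqn : ‖-q‖ < 1 := by rwa [norm_neg]
  have hA1 : HasProd (fun n : ℕ => (1:ℂ) - q^(n+1)) (Pinf q) := (multipliable_fac hq).hasProd
  have hA2 : HasProd (fun n : ℕ => (1:ℂ) - (q^2)^(n+1)) (Pinf (q^2)) := (multipliable_fac hq2).hasProd
  have hA4 : HasProd (fun n : ℕ => (1:ℂ) - (q^4)^(n+1)) (Pinf (q^4)) := (multipliable_fac hq4).hasProd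
  have hA1z : Pinf q ≠ 0 := Pinf_ne_zero hq
  have hA2z : Pinf (q^2) ≠ 0 := Pinf_ne_zero hq2
  have hA4z : Pinf (q^4) ≠ 0 := Pinf_ne_zero hq4
  have hG : HasProd (fun n : ℕ => ((1:ℂ) - (q^2)^(n+1))^3 / ((1 - q^(n+1)) * (1 - (q^4)^(n+1))))
      ((Pinf (q^2))^3 / (Pinf q * Pinf (q^4))) :=
    HasProd.div_c (hasProd_cube hA2) (hA1.mul hA4) (mul_ne_zero hA1z hA4z)
  have step1 : (∏' n : ℕ, (1 - q ^ (2*(n+1)))^9 / ((1 - q ^ (n+1))^3 * (1 - q ^ (4*(n+1)))^3))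
      = ∏' n : ℕ, (((1:ℂ) - (q^2)^(n+1))^3 / ((1 - q^(n+1)) * (1 - (q^4)^(n+1))))^3 := by
    refine tprod_congr fun n => ?_
    rw [pow_mul q 2 (n+1), pow_mul q 4 (n+1)]
    rw [div_pow, mul_pow]
    ring
  have step2 := (hasProd_cube hG).tprod_eq
  rw [step1, step2]
  congr 1
  -- (Pinf (q^2))^3 / (Pinf q * Pinf (q^4)) = Pinf (-q)
  set O₁ := ∏' k : ℕ, ((1:ℂ) - q^(2*k+1)) with hO₁def
  set Om := ∏' k : ℕ, ((1:ℂ) - (-q)^(2*k+1)) with hOmdef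
  have hO₁m : Multipliable (fun k : ℕ => (1:ℂ) - q^(2*k+1)) :=
    gmultipliable hq (fun k => 2*k+1) (fun k => by show k+1 ≤ 2*k+1; omega)
  have hOmm : Multipliable (fun k : ℕ => (1:ℂ) - (-q)^(2*k+1)) :=
    gmultipliable hqn (fun k => 2*k+1) (fun k => by show k+1 ≤ 2*k+1; omega)
  have hO₁z : O₁ ≠ 0 := gtprod_ne_zero hq (fun k => 2*k+1) (fun k => by show k+1 ≤ 2*k+1; omega)
  have hE1 : Pinf q = O₁ * Pinf (q^2) := split_parity hq
  have hEm : Pinf (-q) = Om * Pinf (q^2) := by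
    have := split_parity hqn
    rwa [neg_sq] at this
  have hE2 : Pinf (q^2) = (∏' k : ℕ, ((1:ℂ) - (q^2)^(2*k+1))) * Pinf (q^4) := by
    have := split_parity hq2
    rwa [show ((q^2)^2 : ℂ) = q^4 by ring] at this
  have hOO : O₁ * Om = ∏' k : ℕ, ((1:ℂ) - (q^2)^(2*k+1)) := by
    rw [hO₁def, hOmdef, ← Multipliable.tprod_mul hO₁m hOmm]
    refine tprod_congr fun k => ?_
    have h1 : (-q)^(2*k+1) = -(q^(2*k+1)) := Odd.neg_pow ⟨k, by ring⟩ q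
    have h2 : ((q^2) : ℂ)^(2*k+1) = (q^(2*k+1))^2 := by
      rw [← pow_mul, ← pow_mul]; ring_nf
    rw [h1, h2]
    ring
  rw [div_eq_iff (mul_ne_zero hA1z hA4z), hEm, hE1]
  linear_combination ((Pinf (q^2))^2) * hE2 - ((Pinf (q^2))^2 * Pinf (q^4)) * hOO


theorem prod_quotient_eq_series (q : ℂ) (hq : ‖q‖ < 1) :
    (∏' n : ℕ, (1 - q ^ (2*(n+1)))^9 / ((1 - q ^ (n+1))^3 * (1 - q ^ (4*(n+1)))^3)) =
      ∑' n : ℕ, (kronNegTwo n : ℂ) * (n : ℂ) * q ^ ((n^2 - 1) / 8) := by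
  have hqn : ‖-q‖ < 1 := by rwa [norm_neg]
  rw [prod_side hq, ← jacobi_cube hqn]
  exact (sum_side hq).symm
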